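/- Let p and q be real numbers with p > 0, q > 0 and pq ≠ 1, let n be a natural number, and let u, v be real numbers. Then the generalized q-Quesne Vandermonde formula holds: [u+v]^Q_{n,p,q} = Σ_{κ=0}^{n} C^Q_{p,q}(n,κ) · p^{κ(v−n+κ)} · q^{−(n−κ)(u−κ)} · [u]^Q_{κ,p,q} · [v]^Q_{n−κ,p,q}, and likewise [u+v]^Q_{n,p,q} = Σ_{κ=0}^{n} C^Q_{p,q}(n,κ) · p^{(n−κ)(u−κ)} · q^{−κ(v−n+κ)} · [u]^Q_{κ,p,q} · [v]^Q_{n−κ,p,q}. -/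

import Mathlib

/-- The generalized q-Quesne deformed number `[x]^Q_{p,q} = (p^x - q^{-x})/(q - p⁻¹)`. -/
noncomputable def quesneNum (p q x : ℝ) : ℝ := (p ^ x - q ^ (-x)) / (q - p⁻¹)

/-- The Quesne factorial `[n]^Q_{p,q}! = ∏_{i=1}^n [i]^Q_{p,q}`. -/
noncomputable def quesneFac (p q : ℝ) (n : ℕ) : ℝ :=
  ∏ i ∈ Finset.range n, quesneNum p q ((i : ℝ) + 1)

/-- The j-th order Quesne factorial `[x]^Q_{j,p,q} = ∏_{v=0}^{j-1} [x-v]^Q_{p,q}`. -/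
noncomputable def quesneFacOrd (p q x : ℝ) (j : ℕ) : ℝ :=
  ∏ v ∈ Finset.range j, quesneNum p q (x - (v : ℝ))

/-- The Quesne binomial coefficient `C^Q_{p,q}(n,κ)`. -/
noncomputable def quesneBinom (p q : ℝ) (n k : ℕ) : ℝ :=
  quesneFac p q n / (quesneFac p q k * quesneFac p q (n - k))

namespace QuesneAux

lemma num_add {p q : ℝ} (hp : 0 < p) (hq : 0 < q) (x y : ℝ) :
    quesneNum p q (x + y) = p ^ y * quesneNum p q x + q ^ (-x) * quesneNum p q y := by
  unfold quesneNum
  rw [← mul_div_assoc, ← mul_div_assoc, ← add_div]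
  congr 1
  rw [Real.rpow_add hp, neg_add, Real.rpow_add hq]
  ring

lemma num_ne {p q : ℝ} (hp : 0 < p) (hq : 0 < q) (hpq : p * q ≠ 1) {x : ℝ}
    (hx : x ≠ 0) : quesneNum p q x ≠ 0 := by
  unfold quesneNum
  apply div_ne_zero
  · rw [sub_ne_zero]
    intro h
    have h1 : (p * q) ^ x = 1 := by
      rw [Real.mul_rpow hp.le hq.le, h, ← Real.rpow_add hq, neg_add_cancel, Real.rpow_zero]
    rw [Real.rpow_def_of_pos (mul_pos hp hq), Real.exp_eq_one_iff, mul_eq_zero] at h1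
    rcases h1 with h1 | h1
    · rw [Real.log_eq_zero] at h1
      rcases h1 with h1 | h1 | h1
      · exact absurd h1 (mul_pos hp hq).ne'
      · exact hpq h1
      · nlinarith [mul_pos hp hq]
    · exact hx h1
  · rw [sub_ne_zero]
    intro h
    apply hpq
    field_simp at h
    nlinarith

lemma fac_ne {p q : ℝ} (hp : 0 < p) (hq : 0 < q) (hpq : p * q ≠ 1) (n : ℕ) :
    quesneFac p q n ≠ 0 := by
  unfold quesneFac
  apply Finset.prod_ne_zero_iff.2
  intro i _
  exact num_ne hp hq hpq (by positivity)

lemma fac_succ (p q : ℝ) (n : ℕ) :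
    quesneFac p q (n + 1) = quesneFac p q n * quesneNum p q ((n : ℝ) + 1) := by
  unfold quesneFac
  rw [Finset.prod_range_succ]

lemma facOrd_succ (p q x : ℝ) (j : ℕ) :
    quesneFacOrd p q x (j + 1) = quesneFacOrd p q x j * quesneNum p q (x - (j : ℝ)) := by
  unfold quesneFacOrd
  rw [Finset.prod_range_succ]

lemma binom_zero {p q : ℝ} (hp : 0 < p) (hq : 0 < q) (hpq : p * q ≠ 1) (n : ℕ) :
    quesneBinom p q n 0 = 1 := by
  unfold quesneBinom
  rw [Nat.sub_zero]
  have : quesneFac p q 0 = 1 := by simp [quesneFac]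
  rw [this, one_mul]
  exact div_self (fac_ne hp hq hpq n)

lemma binom_self {p q : ℝ} (hp : 0 < p) (hq : 0 < q) (hpq : p * q ≠ 1) (n : ℕ) :
    quesneBinom p q n n = 1 := by
  unfold quesneBinom
  rw [Nat.sub_self]
  have : quesneFac p q 0 = 1 := by simp [quesneFac]
  rw [this, mul_one]
  exact div_self (fac_ne hp hq hpq n)

lemma pascal {p q : ℝ} (hp : 0 < p) (hq : 0 < q) (hpq : p * q ≠ 1) (n i : ℕ)
    (hin : i + 1 ≤ n) :
    quesneBinom p q (n + 1) (i + 1) =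
      p ^ ((i : ℝ) + 1) * quesneBinom p q n (i + 1)
        + q ^ (-((n : ℝ) - (i : ℝ))) * quesneBinom p q n i := by
  obtain ⟨m, rfl⟩ : ∃ m, n = i + 1 + m := ⟨n - (i + 1), by omega⟩
  have hsub1 : i + 1 + m + 1 - (i + 1) = m + 1 := by omega
  have hsub2 : i + 1 + m - (i + 1) = m := by omega
  have hsub3 : i + 1 + m - i = m + 1 := by omega
  unfold quesneBinom
  rw [hsub1, hsub2, hsub3]
  have hnum : quesneNum p q ((↑(i + 1 + m) : ℝ) + 1)
      = p ^ ((i : ℝ) + 1) * quesneNum p q ((m : ℝ) + 1)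
        + q ^ (-((m : ℝ) + 1)) * quesneNum p q ((i : ℝ) + 1) := by
    have h := num_add hp hq ((m : ℝ) + 1) ((i : ℝ) + 1)
    rw [show ((m : ℝ) + 1) + ((i : ℝ) + 1) = (↑(i + 1 + m) : ℝ) + 1 by push_cast; ring] at h
    rw [h]
  have hexp : -((↑(i + 1 + m) : ℝ) - (i : ℝ)) = -((m : ℝ) + 1) := by push_cast; ring
  rw [hexp, fac_succ p q (i + 1 + m), fac_succ p q i, fac_succ p q m, hnum]
  have h1 := fac_ne hp hq hpq i
  have h2 := fac_ne hp hq hpq m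
  have h3 := fac_ne hp hq hpq (i + 1 + m)
  have h4 : quesneNum p q ((i : ℝ) + 1) ≠ 0 := num_ne hp hq hpq (by positivity)
  have h5 : quesneNum p q ((m : ℝ) + 1) ≠ 0 := num_ne hp hq hpq (by positivity)
  field_simp

/-- Summand with arbitrary coefficient. -/
noncomputable def W (p q : ℝ) (n : ℕ) (u v : ℝ) (j : ℕ) (c : ℝ) : ℝ :=
  c * p ^ ((j : ℝ) * (v - (n : ℝ) + (j : ℝ)))
    * q ^ (-(((n : ℝ) - (j : ℝ)) * (u - (j : ℝ))))
    * quesneFacOrd p q u j * quesneFacOrd p q v (n - j)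

lemma W_add (p q : ℝ) (n : ℕ) (u v : ℝ) (j : ℕ) (c d : ℝ) :
    W p q n u v j c + W p q n u v j d = W p q n u v j (c + d) := by
  unfold W; ring

lemma key_term {p q : ℝ} (hp : 0 < p) (hq : 0 < q) (n κ : ℕ) (hκ : κ ≤ n)
    (u v : ℝ) (c : ℝ) :
    W p q n u v κ c * quesneNum p q (u + v - (n : ℝ))
      = W p q (n + 1) u v (κ + 1) (q ^ (-((n : ℝ) - (κ : ℝ))) * c)
        + W p q (n + 1) u v κ (p ^ (κ : ℝ) * c) := by
  have hnum : quesneNum p q (u + v - (n : ℝ))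
      = p ^ (v - (n : ℝ) + (κ : ℝ)) * quesneNum p q (u - (κ : ℝ))
        + q ^ (-(u - (κ : ℝ))) * quesneNum p q (v - (n : ℝ) + (κ : ℝ)) := by
    have h := num_add hp hq (u - (κ : ℝ)) (v - (n : ℝ) + (κ : ℝ))
    rw [show (u - (κ : ℝ)) + (v - (n : ℝ) + (κ : ℝ)) = u + v - (n : ℝ) by ring] at h
    exact h
  unfold W
  rw [hnum, mul_add]
  congr 1
  · rw [facOrd_succ p q u κ, Nat.succ_sub_succ]
    rw [show ((↑(κ + 1) : ℝ)) * (v - ↑(n + 1) + ↑(κ + 1)) = ↑κ * (v - ↑n + ↑κ) + (v - ↑n + ↑κ) by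
        push_cast; ring,
      Real.rpow_add hp (↑κ * (v - ↑n + ↑κ)) (v - ↑n + ↑κ),
      show (-(((↑n : ℝ) - ↑κ) * (u - ↑κ))) = (-((↑n : ℝ) - ↑κ)) +
        (-(((↑(n + 1) : ℝ) - ↑(κ + 1)) * (u - ↑(κ + 1)))) by push_cast; ring,
      Real.rpow_add hq (-((↑n : ℝ) - ↑κ)) (-(((↑(n + 1) : ℝ) - ↑(κ + 1)) * (u - ↑(κ + 1))))]
    ring
  · rw [show n + 1 - κ = (n - κ) + 1 by omega, facOrd_succ p q v (n - κ), Nat.cast_sub hκ,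
      show v - ((↑n : ℝ) - ↑κ) = v - ↑n + ↑κ by ring,
      show ((↑κ : ℝ)) * (v - ↑n + ↑κ) = ↑κ + ↑κ * (v - ↑(n + 1) + ↑κ) by push_cast; ring,
      Real.rpow_add hp (↑κ : ℝ) (↑κ * (v - ↑(n + 1) + ↑κ)),
      show (-(((↑(n + 1) : ℝ) - ↑κ) * (u - ↑κ))) = (-(((↑n : ℝ) - ↑κ) * (u - ↑κ))) + (-(u - ↑κ)) by
        push_cast; ring,
      Real.rpow_add hq (-(((↑n : ℝ) - ↑κ) * (u - ↑κ))) (-(u - ↑κ))]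
    ring

lemma formula1 {p q : ℝ} (hp : 0 < p) (hq : 0 < q) (hpq : p * q ≠ 1) (n : ℕ) (u v : ℝ) :
    quesneFacOrd p q (u + v) n
      = ∑ κ ∈ Finset.range (n + 1), W p q n u v κ (quesneBinom p q n κ) := by
  induction n with
  | zero =>
      rw [Finset.sum_range_one]
      unfold W quesneFacOrd
      rw [binom_zero hp hq hpq]
      norm_num
  | succ n ih =>
      calc quesneFacOrd p q (u + v) (n + 1)
          = (∑ κ ∈ Finset.range (n + 1), W p q n u v κ (quesneBinom p q n κ))
              * quesneNum p q (u + v - (n : ℝ)) := by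
            rw [facOrd_succ, ih]
        _ = ∑ κ ∈ Finset.range (n + 1),
              (W p q (n + 1) u v (κ + 1) (q ^ (-((n : ℝ) - (κ : ℝ))) * quesneBinom p q n κ)
                + W p q (n + 1) u v κ (p ^ (κ : ℝ) * quesneBinom p q n κ)) := by
            rw [Finset.sum_mul]
            exact Finset.sum_congr rfl fun κ hκ =>
              key_term hp hq n κ (Nat.lt_succ_iff.mp (Finset.mem_range.mp hκ)) u v _
        _ = (∑ κ ∈ Finset.range (n + 1),
              W p q (n + 1) u v (κ + 1) (q ^ (-((n : ℝ) - (κ : ℝ))) * quesneBinom p q n κ))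
            + ∑ κ ∈ Finset.range (n + 1),
              W p q (n + 1) u v κ (p ^ (κ : ℝ) * quesneBinom p q n κ) := by
            rw [Finset.sum_add_distrib]
        _ = ((∑ κ ∈ Finset.range n,
              W p q (n + 1) u v (κ + 1) (q ^ (-((n : ℝ) - (κ : ℝ))) * quesneBinom p q n κ))
              + W p q (n + 1) u v (n + 1) (q ^ (-((n : ℝ) - (n : ℝ))) * quesneBinom p q n n))
            + ((∑ κ ∈ Finset.range n,
              W p q (n + 1) u v (κ + 1) (p ^ ((↑(κ + 1) : ℝ)) * quesneBinom p q n (κ + 1)))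
              + W p q (n + 1) u v 0 (p ^ ((↑(0 : ℕ) : ℝ)) * quesneBinom p q n 0)) := by
            rw [Finset.sum_range_succ, Finset.sum_range_succ']
        _ = (∑ κ ∈ Finset.range n, W p q (n + 1) u v (κ + 1) (quesneBinom p q (n + 1) (κ + 1)))
            + W p q (n + 1) u v (n + 1) (quesneBinom p q (n + 1) (n + 1))
            + W p q (n + 1) u v 0 (quesneBinom p q (n + 1) 0) := by
            have e1 : W p q (n + 1) u v (n + 1) (q ^ (-((n : ℝ) - (n : ℝ))) * quesneBinom p q n n)
                = W p q (n + 1) u v (n + 1) (quesneBinom p q (n + 1) (n + 1)) := by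
              rw [show -((n : ℝ) - (n : ℝ)) = 0 by ring, Real.rpow_zero, one_mul,
                binom_self hp hq hpq, binom_self hp hq hpq]
            have e2 : W p q (n + 1) u v 0 (p ^ ((↑(0 : ℕ) : ℝ)) * quesneBinom p q n 0)
                = W p q (n + 1) u v 0 (quesneBinom p q (n + 1) 0) := by
              rw [Nat.cast_zero, Real.rpow_zero, one_mul,
                binom_zero hp hq hpq, binom_zero hp hq hpq]
            have e3 : ∀ κ ∈ Finset.range n,
                W p q (n + 1) u v (κ + 1) (q ^ (-((n : ℝ) - (κ : ℝ))) * quesneBinom p q n κ)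
                  + W p q (n + 1) u v (κ + 1) (p ^ ((↑(κ + 1) : ℝ)) * quesneBinom p q n (κ + 1))
                = W p q (n + 1) u v (κ + 1) (quesneBinom p q (n + 1) (κ + 1)) := by
              intro κ hκ
              rw [W_add]
              congr 1
              rw [pascal hp hq hpq n κ (Finset.mem_range.mp hκ)]
              push_cast
              ring
            have e4 : (∑ κ ∈ Finset.range n,
                W p q (n + 1) u v (κ + 1) (q ^ (-((n : ℝ) - (κ : ℝ))) * quesneBinom p q n κ))
                + ∑ κ ∈ Finset.range n,
                W p q (n + 1) u v (κ + 1) (p ^ ((↑(κ + 1) : ℝ)) * quesneBinom p q n (κ + 1))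
                = ∑ κ ∈ Finset.range n,
                W p q (n + 1) u v (κ + 1) (quesneBinom p q (n + 1) (κ + 1)) := by
              rw [← Finset.sum_add_distrib]
              exact Finset.sum_congr rfl e3
            rw [e1, e2]
            linarith [e4]
        _ = ∑ κ ∈ Finset.range (n + 1 + 1),
              W p q (n + 1) u v κ (quesneBinom p q (n + 1) κ) := by
            rw [Finset.sum_range_succ, Finset.sum_range_succ']
            ring

end QuesneAux

namespace QuesneAux

lemma num_swap {p q : ℝ} (hp : 0 < p) (hq : 0 < q) (x : ℝ) :
    quesneNum q⁻¹ p⁻¹ x = quesneNum p q x := by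
  unfold quesneNum
  rw [Real.inv_rpow hq.le, ← Real.rpow_neg hq.le, Real.inv_rpow hp.le,
    Real.rpow_neg hp.le, inv_inv, inv_inv,
    show q ^ (-x) - p ^ x = -(p ^ x - q ^ (-x)) by ring,
    show p⁻¹ - q = -(q - p⁻¹) by ring, neg_div_neg_eq]

lemma fac_swap {p q : ℝ} (hp : 0 < p) (hq : 0 < q) (n : ℕ) :
    quesneFac q⁻¹ p⁻¹ n = quesneFac p q n := by
  unfold quesneFac
  exact Finset.prod_congr rfl fun i _ => num_swap hp hq _

lemma facOrd_swap {p q : ℝ} (hp : 0 < p) (hq : 0 < q) (x : ℝ) (j : ℕ) :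
    quesneFacOrd q⁻¹ p⁻¹ x j = quesneFacOrd p q x j := by
  unfold quesneFacOrd
  exact Finset.prod_congr rfl fun i _ => num_swap hp hq _

lemma binom_swap {p q : ℝ} (hp : 0 < p) (hq : 0 < q) (n k : ℕ) :
    quesneBinom q⁻¹ p⁻¹ n k = quesneBinom p q n k := by
  unfold quesneBinom
  rw [fac_swap hp hq, fac_swap hp hq, fac_swap hp hq]

end QuesneAux

open QuesneAux in
/-- The generalized q-Quesne Vandermonde formulas. -/
theorem quesne_vandermonde (p q : ℝ) (hp : 0 < p) (hq : 0 < q) (hpq : p * q ≠ 1)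
    (n : ℕ) (u v : ℝ) :
    (quesneFacOrd p q (u + v) n =
      ∑ κ ∈ Finset.range (n + 1),
        quesneBinom p q n κ * p ^ ((κ : ℝ) * (v - (n : ℝ) + (κ : ℝ)))
          * q ^ (-(((n : ℝ) - (κ : ℝ)) * (u - (κ : ℝ))))
          * quesneFacOrd p q u κ * quesneFacOrd p q v (n - κ)) ∧
    (quesneFacOrd p q (u + v) n =
      ∑ κ ∈ Finset.range (n + 1),
        quesneBinom p q n κ * p ^ (((n : ℝ) - (κ : ℝ)) * (u - (κ : ℝ)))
          * q ^ (-((κ : ℝ) * (v - (n : ℝ) + (κ : ℝ))))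
          * quesneFacOrd p q u κ * quesneFacOrd p q v (n - κ)) := by
  constructor
  · rw [formula1 hp hq hpq n u v]
    exact Finset.sum_congr rfl fun κ _ => rfl
  · have hpq' : q⁻¹ * p⁻¹ ≠ 1 := by
      rw [Ne, ← mul_inv, mul_comm q p, inv_eq_one]
      exact hpq
    have h2 := formula1 (inv_pos.2 hq) (inv_pos.2 hp) hpq' n u v
    rw [facOrd_swap hp hq] at h2
    rw [h2]
    refine Finset.sum_congr rfl fun κ _ => ?_
    unfold W
    rw [binom_swap hp hq, facOrd_swap hp hq, facOrd_swap hp hq,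
      Real.inv_rpow hq.le, ← Real.rpow_neg hq.le,
      Real.inv_rpow hp.le, ← Real.rpow_neg hp.le, neg_neg]
    ring
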